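/- Let m ≡ 1 (mod 12) with m ≥ 13, n = 2^m - 1, and v = 2^((m-1)/2) - 1. For every integer a with 1 ≤ a ≤ 2^((m-1)/2) + 2, the binary digit sum of (a·v mod n) is congruent to 0, 4, or 5 modulo 6. -/

import Mathlib

private def S (n : ℕ) : ℕ := (Nat.digits 2 n).sum

private lemma S_zero : S 0 = 0 := by simp [S]

private lemma S_bit (q r : ℕ) (hr : r < 2) : S (2 * q + r) = r + S q := by
  rcases Nat.eq_zero_or_pos (2 * q + r) with h0 | h0
  · have hq : q = 0 := by omega
    have hr0 : r = 0 := by omega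
    simp [hq, hr0, S_zero]
  · unfold S
    rw [Nat.digits_def' (by norm_num : 1 < 2) h0]
    have h1 : (2 * q + r) % 2 = r := by omega
    have h2 : (2 * q + r) / 2 = q := by omega
    rw [h1, h2]
    simp [List.sum_cons]

private lemma S_compl : ∀ k x : ℕ, x < 2 ^ k → S x + S (2 ^ k - 1 - x) = k := by
  intro k
  induction k with
  | zero => intro x hx; interval_cases x; simp [S_zero]
  | succ k ih =>
    intro x hx
    have hP : 2 ^ (k + 1) = 2 * 2 ^ k := by ring
    have hq : x / 2 < 2 ^ k := by omega
    have hx2 : x = 2 * (x / 2) + x % 2 := by omega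
    have hc : 2 ^ (k + 1) - 1 - x = 2 * (2 ^ k - 1 - x / 2) + (1 - x % 2) := by
      have := Nat.one_le_two_pow (n := k)
      omega
    have h1 : S x = x % 2 + S (x / 2) := by
      conv_lhs => rw [hx2]
      exact S_bit _ _ (Nat.mod_lt _ (by norm_num))
    have h2 : S (2 ^ (k + 1) - 1 - x) = (1 - x % 2) + S (2 ^ k - 1 - x / 2) := by
      rw [hc]; exact S_bit _ _ (by omega)
    have := ih (x / 2) hq
    omega

private lemma S_split (a : ℕ) : ∀ k b : ℕ, b < 2 ^ k → S (a * 2 ^ k + b) = S a + S b := by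
  intro k
  induction k with
  | zero => intro b hb; interval_cases b; simp [S_zero]
  | succ k ih =>
    intro b hb
    have hb2 : b / 2 < 2 ^ k := by
      have : 2 ^ (k + 1) = 2 * 2 ^ k := by ring
      omega
    have key : a * 2 ^ (k + 1) + b = 2 * (a * 2 ^ k + b / 2) + b % 2 := by
      have : a * 2 ^ (k + 1) = 2 * (a * 2 ^ k) := by ring
      omega
    rw [key, S_bit _ _ (Nat.mod_lt _ (by norm_num)), ih _ hb2]
    have hbS : S b = b % 2 + S (b / 2) := by
      conv_lhs => rw [show b = 2 * (b / 2) + b % 2 by omega]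
      exact S_bit _ _ (Nat.mod_lt _ (by norm_num))
    omega

theorem digitSum_av_m1mod12 (m : ℕ) (hm : 13 ≤ m) (h : m % 12 = 1)
    (a : ℕ) (ha1 : 1 ≤ a) (ha2 : a ≤ 2 ^ ((m - 1) / 2) + 2) :
    (Nat.digits 2 (a * (2 ^ ((m - 1) / 2) - 1) % (2 ^ m - 1))).sum % 6 = 0 ∨
    (Nat.digits 2 (a * (2 ^ ((m - 1) / 2) - 1) % (2 ^ m - 1))).sum % 6 = 4 ∨
    (Nat.digits 2 (a * (2 ^ ((m - 1) / 2) - 1) % (2 ^ m - 1))).sum % 6 = 5 := by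
  set k := (m - 1) / 2 with hk
  have hmk : m = 2 * k + 1 := by omega
  have hk6 : k % 6 = 0 := by omega
  have hk1 : 6 ≤ k := by omega
  have hP : (64 : ℕ) ≤ 2 ^ k := by
    calc (64 : ℕ) = 2 ^ 6 := by norm_num
    _ ≤ 2 ^ k := Nat.pow_le_pow_right (by norm_num) hk1
  have h2m : 2 ^ m = 2 * (2 ^ k * 2 ^ k) := by
    rw [hmk, pow_succ, two_mul k, pow_add]; ring
  have h2k : 2 ^ (2 * k) = 2 ^ k * 2 ^ k := by rw [two_mul, pow_add]
  have hsq : 2 ^ k ≤ 2 ^ k * 2 ^ k := Nat.le_mul_of_pos_left _ (by positivity)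
  have h2 : (2 ^ k + 2) * (2 ^ k - 1) + 2 = 2 ^ k * 2 ^ k + 2 ^ k := by
    obtain ⟨c, hc⟩ := Nat.exists_eq_add_of_le (show 1 ≤ 2 ^ k by omega)
    rw [hc, show (1 : ℕ) + c - 1 = c from by omega]; ring
  -- a * v < n
  have hlt : a * (2 ^ k - 1) < 2 ^ m - 1 := by
    have h1 : a * (2 ^ k - 1) ≤ (2 ^ k + 2) * (2 ^ k - 1) :=
      Nat.mul_le_mul_right _ ha2
    omega
  rw [Nat.mod_eq_of_lt hlt]
  left
  show S (a * (2 ^ k - 1)) % 6 = 0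
  suffices hS : S (a * (2 ^ k - 1)) % 6 = k % 6 by omega
  rcases le_or_gt a (2 ^ k) with hle | hgt
  · -- a ≤ 2^k : a*(2^k-1) = (a-1)*2^k + (2^k - a)
    obtain ⟨c, hc⟩ := Nat.exists_eq_add_of_le ha1
    obtain ⟨d, hd⟩ := Nat.exists_eq_add_of_le hle
    have heq : a * (2 ^ k - 1) = (a - 1) * 2 ^ k + (2 ^ k - a) := by
      rw [hc] at hd
      rw [hc, hd, show (1 : ℕ) + c + d - 1 = c + d from by omega,
        show (1 : ℕ) + c - 1 = c from by omega,
        show (1 : ℕ) + c + d - (1 + c) = d from by omega]; ring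
    rw [heq, S_split _ _ _ (by omega),
      show 2 ^ k - a = 2 ^ k - 1 - (a - 1) from by omega]
    have hcompl : S (a - 1) + S (2 ^ k - 1 - (a - 1)) = k :=
      S_compl k (a - 1) (by omega)
    omega
  · rcases (by omega : a = 2 ^ k + 1 ∨ a = 2 ^ k + 2) with rfl | rfl
    · -- value = 2^(2k) - 1
      have heq : (2 ^ k + 1) * (2 ^ k - 1) + 1 = 2 ^ (2 * k) := by
        obtain ⟨c, hc⟩ := Nat.exists_eq_add_of_le (show 1 ≤ 2 ^ k by omega)
        rw [h2k, hc, show (1 : ℕ) + c - 1 = c from by omega]; ring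
      rw [show (2 ^ k + 1) * (2 ^ k - 1) = 2 ^ (2 * k) - 1 from by omega]
      have h0 : S 0 + S (2 ^ (2 * k) - 1 - 0) = 2 * k :=
        S_compl (2 * k) 0 (Nat.pow_pos (by norm_num))
      simp only [S_zero, Nat.sub_zero] at h0
      omega
    · -- value = 2^(2k) + (2^k - 2)
      rw [show (2 ^ k + 2) * (2 ^ k - 1) = 1 * 2 ^ (2 * k) + (2 ^ k - 2) from by omega,
        S_split _ _ _ (by omega),
        show 2 ^ k - 2 = 2 ^ k - 1 - 1 from by omega]
      have h1 : S 1 + S (2 ^ k - 1 - 1) = k := S_compl k 1 (by omega)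
      have hS1 : S 1 = 1 := by simp [S]
      omega
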